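/- Let (M,d) be a proper metric space and μ ∈ P₁(M). If there exists a point m ∈ M with μ({m}) > 1/2, then m is the unique Fréchet median of μ. -/

import Mathlib

open MeasureTheory Metric

/-- If `μ({m}) > 1/2`, then `m` is the unique Fréchet median of `μ`. -/
theorem unique_frechet_median_of_majority_atom
    {M : Type*} [MetricSpace M] [ProperSpace M]
    [MeasurableSpace M] [BorelSpace M]
    (μ : Measure M) [IsProbabilityMeasure μ]
    (x₀ : M) (hmom : Integrable (fun p => dist x₀ p) μ)
    (m : M) (hm : (1 / 2 : ENNReal) < μ {m}) :
    (∀ y : M, (∫ p, dist m p ∂μ) ≤ ∫ p, dist y p ∂μ) ∧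
      (∀ x : M, (∀ y : M, (∫ p, dist x p ∂μ) ≤ ∫ p, dist y p ∂μ) → x = m) := by
  have hmeas : MeasurableSet ({m} : Set M) := measurableSet_singleton m
  have hμ1 : μ {m} ≠ ⊤ := measure_ne_top μ _
  set c : ℝ := (μ {m}).toReal with hcdef
  have hc2 : (1/2 : ℝ) < c := by
    have := (ENNReal.toReal_lt_toReal (by norm_num) hμ1).mpr hm
    simpa using this
  have hcompl : (μ ({m}ᶜ)).toReal = 1 - c := by
    rw [measure_compl hmeas hμ1, measure_univ,
      ENNReal.toReal_sub_of_le prob_le_one (by norm_num)]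
    simp
    exact hcdef.symm
  have hint : ∀ y : M, Integrable (fun p => dist y p) μ := by
    intro y
    refine ((integrable_const (dist y x₀)).add hmom).mono'
      ((continuous_const.dist continuous_id).aestronglyMeasurable) ?_
    filter_upwards with p
    simpa [abs_of_nonneg dist_nonneg] using dist_triangle y x₀ p
  have key : ∀ y : M, (∫ p, dist m p ∂μ) + dist m y * (2*c - 1) ≤ ∫ p, dist y p ∂μ := by
    intro y
    have hsub : Integrable (fun p => dist y p - dist m p) μ := (hint y).sub (hint m)
    have hsplit : ∫ p, (dist y p - dist m p) ∂μ
        = (∫ p in ({m} : Set M), (dist y p - dist m p) ∂μ)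
          + ∫ p in ({m}ᶜ : Set M), (dist y p - dist m p) ∂μ :=
      (integral_add_compl hmeas hsub).symm
    have h1 : ∫ p in ({m} : Set M), (dist y p - dist m p) ∂μ = dist y m * c := by
      rw [setIntegral_congr_fun (g := fun _ => dist y m) hmeas ?_, setIntegral_const,
        smul_eq_mul, mul_comm]
      · rfl
      intro p hp
      simp only [Set.mem_singleton_iff] at hp
      subst hp; simp
    have h2 : -(dist y m) * (1 - c) ≤ ∫ p in ({m}ᶜ : Set M), (dist y p - dist m p) ∂μ := by
      have hb : ∀ p ∈ ({m}ᶜ : Set M), -(dist y m) ≤ dist y p - dist m p := by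
        intro p _
        have h := dist_triangle m y p
        have : dist m y = dist y m := dist_comm m y
        linarith
      have := setIntegral_mono_on integrableOn_const
        hsub.integrableOn hmeas.compl hb
      rwa [setIntegral_const, smul_eq_mul, measureReal_def, hcompl, mul_comm] at this
    have hmain : dist m y * (2*c - 1) ≤ ∫ p, (dist y p - dist m p) ∂μ := by
      rw [hsplit, h1]
      have hyx : dist m y = dist y m := dist_comm m y
      nlinarith [h2]
    rw [integral_sub (hint y) (hint m)] at hmain
    linarith
  have hfirst : ∀ y : M, (∫ p, dist m p ∂μ) ≤ ∫ p, dist y p ∂μ := by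
    intro y
    have h := key y
    have hnn : 0 ≤ dist m y * (2*c - 1) :=
      mul_nonneg dist_nonneg (by linarith)
    linarith
  refine ⟨hfirst, ?_⟩
  intro x hx
  have h1 := hx m
  have h2 := key x
  have hd : dist m x * (2*c - 1) ≤ 0 := by linarith
  have hpos : (0:ℝ) < 2*c - 1 := by linarith
  have hzero : dist m x ≤ 0 := by nlinarith [dist_nonneg (x := m) (y := x)]
  exact (dist_le_zero.mp hzero).symm
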